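/- Fix ε > 0 and w ∈ ℝ^L. Then w ∈ R_j^ε if and only if argmax^ε(w) = {j}. -/

import Mathlib

noncomputable section

/-- The set `R_j^ε = {w ∈ ℝ^L : w_j ≥ max_{ℓ≠j} w_ℓ + ε/√2}`. -/
def Rset (L : ℕ) (ε : ℝ) (j : Fin L) : Set (EuclideanSpace ℝ (Fin L)) :=
  {w | ∀ ℓ : Fin L, ℓ ≠ j → w ℓ + ε / Real.sqrt 2 ≤ w j}

/-- The inflated argmax: `argmax^ε(w) = {j ∈ [L] : dist(w, R_j^ε) < ε}`. -/
def inflatedArgmax (L : ℕ) (ε : ℝ) (w : EuclideanSpace ℝ (Fin L)) : Set (Fin L) :=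
  {j | Metric.infDist w (Rset L ε j) < ε}

lemma Rset_nonempty (L : ℕ) (ε : ℝ) (hε : 0 < ε) (k : Fin L) :
    (Rset L ε k).Nonempty := by
  refine ⟨WithLp.toLp 2 (fun ℓ => if ℓ = k then ε / Real.sqrt 2 else 0 : Fin L → ℝ), ?_⟩
  intro ℓ hℓ
  simp [hℓ]

/-- If `k` maximizes `w` among indices `≠ j` and `w j < w k + ε/√2`, then
`dist(w, R_k^ε) < ε`. -/
lemma infDist_lt_of_near_max (L : ℕ) (ε : ℝ) (hε : 0 < ε)
    (w : EuclideanSpace ℝ (Fin L)) (j k : Fin L) (hjk : j ≠ k)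
    (hmax : ∀ ℓ : Fin L, ℓ ≠ j → w ℓ ≤ w k)
    (hnear : w j < w k + ε / Real.sqrt 2) :
    Metric.infDist w (Rset L ε k) < ε := by
  have h2 : (0:ℝ) < Real.sqrt 2 := Real.sqrt_pos.mpr (by norm_num)
  have hεs : 0 < ε / Real.sqrt 2 := div_pos hε h2
  set u : EuclideanSpace ℝ (Fin L) :=
    WithLp.toLp 2 (fun ℓ => if ℓ = k then w k + ε / Real.sqrt 2
              else if ℓ = j then min (w j) (w k) else w ℓ) with hu
  have huk : u k = w k + ε / Real.sqrt 2 := by simp [hu]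
  have huj : u j = min (w j) (w k) := by simp [hu, hjk]
  have humem : u ∈ Rset L ε k := by
    intro ℓ hℓ
    rcases eq_or_ne ℓ j with rfl | hℓj
    · rw [huj, huk]
      have : min (w ℓ) (w k) ≤ w k := min_le_right _ _
      linarith
    · have : u ℓ = w ℓ := by simp [hu, hℓ, hℓj]
      rw [this, huk]
      have := hmax ℓ hℓj
      linarith
  have hdist : dist w u < ε := by
    rw [EuclideanSpace.dist_eq, Real.sqrt_lt' hε]
    have hsum : ∑ i, dist (w i) (u i) ^ 2
        = ∑ i ∈ ({j, k} : Finset (Fin L)), dist (w i) (u i) ^ 2 := by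
      symm
      apply Finset.sum_subset (Finset.subset_univ _)
      intro i _ hi
      simp only [Finset.mem_insert, Finset.mem_singleton, not_or] at hi
      have : u i = w i := by simp [hu, hi.1, hi.2]
      simp [this]
    rw [hsum, Finset.sum_pair hjk, huj, huk]
    have e2 : (ε / Real.sqrt 2) ^ 2 = ε ^ 2 / 2 := by
      rw [div_pow, Real.sq_sqrt (by norm_num : (0:ℝ) ≤ 2)]
    have h1 : dist (w k) (w k + ε / Real.sqrt 2) ^ 2 = ε ^ 2 / 2 := by
      rw [Real.dist_eq, ← e2]
      rw [abs_of_nonpos (by linarith)]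
      ring_nf
    have h0 : dist (w j) (min (w j) (w k)) ^ 2 < ε ^ 2 / 2 := by
      have habs : dist (w j) (min (w j) (w k)) < ε / Real.sqrt 2 := by
        rw [Real.dist_eq]
        rcases le_total (w j) (w k) with h | h
        · rw [min_eq_left h]; simpa using hεs
        · rw [min_eq_right h, abs_of_nonneg (by linarith)]
          linarith
      have hnn : 0 ≤ dist (w j) (min (w j) (w k)) := dist_nonneg
      calc dist (w j) (min (w j) (w k)) ^ 2 < (ε / Real.sqrt 2) ^ 2 := by
              exact pow_lt_pow_left₀ habs hnn (by norm_num)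
        _ = ε ^ 2 / 2 := e2
    linarith
  exact (Metric.infDist_lt_iff ⟨u, humem⟩).mpr ⟨u, humem, hdist⟩

/-- If `w ∈ R_j^ε` and `k ≠ j`, then every point of `R_k^ε` is at distance `≥ ε`. -/
lemma eps_le_dist_of_mem (L : ℕ) (ε : ℝ) (hε : 0 < ε)
    (w v : EuclideanSpace ℝ (Fin L)) (j k : Fin L) (hkj : k ≠ j)
    (hw : w ∈ Rset L ε j) (hv : v ∈ Rset L ε k) :
    ε ≤ dist w v := by
  have h2 : (0:ℝ) < Real.sqrt 2 := Real.sqrt_pos.mpr (by norm_num)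
  have e2 : (ε / Real.sqrt 2) ^ 2 = ε ^ 2 / 2 := by
    rw [div_pow, Real.sq_sqrt (by norm_num : (0:ℝ) ≤ 2)]
  have hw' := hw k hkj
  have hv' := hv j (Ne.symm hkj)
  set a := w j - v j with ha
  set b := w k - v k with hb
  have hab : 2 * (ε / Real.sqrt 2) ≤ a - b := by
    simp only [ha, hb]; linarith
  have key : ε ^ 2 ≤ a ^ 2 + b ^ 2 := by
    have hs : (0:ℝ) ≤ 2 * (ε / Real.sqrt 2) := by positivity
    have h4 : (2 * (ε / Real.sqrt 2)) ^ 2 ≤ (a - b) ^ 2 :=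
      pow_le_pow_left₀ hs hab 2
    nlinarith [sq_nonneg (a + b), h4, e2]
  have hsum : a ^ 2 + b ^ 2 ≤ ∑ i, dist (w i) (v i) ^ 2 := by
    have : a ^ 2 + b ^ 2 = ∑ i ∈ ({j, k} : Finset (Fin L)), dist (w i) (v i) ^ 2 := by
      rw [Finset.sum_pair (Ne.symm hkj)]
      simp [Real.dist_eq, sq_abs, ha, hb]
    rw [this]
    apply Finset.sum_le_sum_of_subset_of_nonneg (Finset.subset_univ _)
    intro i _ _
    positivity
  rw [EuclideanSpace.dist_eq]
  calc ε = Real.sqrt (ε ^ 2) := by rw [Real.sqrt_sq hε.le]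
    _ ≤ _ := Real.sqrt_le_sqrt (le_trans key hsum)

/-- `w ∈ R_j^ε` if and only if `argmax^ε(w) = {j}`. -/
theorem mem_Rset_iff_inflatedArgmax_singleton (L : ℕ) (hL : 2 ≤ L) (ε : ℝ)
    (hε : 0 < ε) (w : EuclideanSpace ℝ (Fin L)) (j : Fin L) :
    w ∈ Rset L ε j ↔ inflatedArgmax L ε w = {j} := by
  constructor
  · intro hw
    ext k
    simp only [inflatedArgmax, Set.mem_setOf_eq, Set.mem_singleton_iff]
    constructor
    · intro hk
      by_contra hkj
      rcases (Metric.infDist_lt_iff (Rset_nonempty L ε hε k)).mp hk with ⟨v, hv, hdv⟩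
      exact absurd hdv (not_lt.mpr (eps_le_dist_of_mem L ε hε w v j k hkj hw hv))
    · rintro rfl
      rw [Metric.infDist_zero_of_mem hw]
      exact hε
  · intro h
    by_contra hw
    simp only [Rset, Set.mem_setOf_eq, not_forall] at hw
    obtain ⟨ℓ₀, hℓ₀j, hℓ₀⟩ := hw
    push_neg at hℓ₀
    -- pick a maximizer of w over indices ≠ j
    have hne : (Finset.univ.erase j).Nonempty := by
      refine ⟨ℓ₀, Finset.mem_erase.mpr ⟨hℓ₀j, Finset.mem_univ _⟩⟩
    obtain ⟨k, hkmem, hkmax⟩ := Finset.exists_max_image (Finset.univ.erase j) w hne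
    have hkj : k ≠ j := (Finset.mem_erase.mp hkmem).1
    have hmax : ∀ ℓ : Fin L, ℓ ≠ j → w ℓ ≤ w k := fun ℓ hℓ =>
      hkmax ℓ (Finset.mem_erase.mpr ⟨hℓ, Finset.mem_univ _⟩)
    have hnear : w j < w k + ε / Real.sqrt 2 := by
      have := hmax ℓ₀ hℓ₀j
      linarith
    have hk : k ∈ inflatedArgmax L ε w :=
      infDist_lt_of_near_max L ε hε w j k (Ne.symm hkj) hmax hnear
    rw [h] at hk
    exact hkj hk
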